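/- Let n ≥ 7 and let t be an integer with 2 ≤ t ≤ ⌊(n−1)/2⌋ − 1, and set M := n − t − 2. Let F be a finite field of arbitrary characteristic, let V be a finite-dimensional F-vector space with dim V ≤ n − t − 3, and let A_1,…,A_M, B_1,…,B_{t+1}, C be subspaces of V. Then inequality (a) holds. -/

import Mathlib

open Finset

variable {F V : Type*} [Field F] [AddCommGroup V] [Module F V]

/-- `eH X` is the dimension of the subspace `X`, as an integer
(the "entropy" `H(X)` of the paper). -/
noncomputable def eH (X : Submodule F V) : ℤ := Module.finrank F X

section helpers
variable [FiniteDimensional F V]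

omit [FiniteDimensional F V] in
lemma eH_nonneg (X : Submodule F V) : 0 ≤ eH X := Int.natCast_nonneg _

lemma eH_mono {X Y : Submodule F V} (h : X ≤ Y) : eH X ≤ eH Y := by
  unfold eH; exact_mod_cast Submodule.finrank_mono h

lemma eH_sup_inf (X Y : Submodule F V) : eH (X ⊔ Y) + eH (X ⊓ Y) = eH X + eH Y := by
  unfold eH; exact_mod_cast Submodule.finrank_sup_add_finrank_inf_eq X Y

lemma eH_sup_le (X Y : Submodule F V) : eH (X ⊔ Y) ≤ eH X + eH Y := by
  have h := eH_sup_inf X Y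
  have := eH_nonneg (X ⊓ Y)
  linarith

lemma eH_sum_le (s : Finset ℕ) (f : ℕ → Submodule F V) :
    eH (∑ i ∈ s, f i) ≤ ∑ i ∈ s, eH (f i) := by
  classical
  induction s using Finset.cons_induction with
  | empty => simp [eH]; exact finrank_bot (R := F) (M := V)
  | cons a s ha ih =>
    rw [Finset.sum_cons, Finset.sum_cons, Submodule.add_eq_sup]
    exact le_trans (eH_sup_le _ _) (by linarith)

/-- `dim(X ∩ (A + C)) ≤ dim A + dim(X ∩ C)`. -/
lemma eH_inf_sup_le (X A C : Submodule F V) : eH (X ⊓ (A ⊔ C)) ≤ eH A + eH (X ⊓ C) := by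
  set U := X ⊓ (A ⊔ C) with hU
  have h1 := eH_sup_inf U C
  have h2 : eH (U ⊔ C) ≤ eH (A ⊔ C) := eH_mono (sup_le (inf_le_right) le_sup_right)
  have h3 : eH (A ⊔ C) ≤ eH A + eH C := eH_sup_le _ _
  have h4 : eH (U ⊓ C) ≤ eH (X ⊓ C) := eH_mono (inf_le_inf_right _ inf_le_left)
  linarith

/-- `dim(B∩X) + dim(B∩Y) ≤ dim B + dim(X∩Y)`. -/
lemma eH_pair (Bb X Y : Submodule F V) :
    eH (Bb ⊓ X) + eH (Bb ⊓ Y) ≤ eH Bb + eH (X ⊓ Y) := by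
  have h1 := eH_sup_inf (Bb ⊓ X) (Bb ⊓ Y)
  have h2 : eH ((Bb ⊓ X) ⊔ (Bb ⊓ Y)) ≤ eH Bb :=
    eH_mono (sup_le inf_le_left inf_le_left)
  have h3 : eH ((Bb ⊓ X) ⊓ (Bb ⊓ Y)) ≤ eH (X ⊓ Y) :=
    eH_mono (le_inf (inf_le_left.trans inf_le_right) (inf_le_right.trans inf_le_right))
  linarith

/-- modular step: `dim((X+Y)∩A) ≤ dim((X+A)∩Y) + dim(X∩A)`. -/
lemma eH_modstep (X Y A : Submodule F V) :
    eH ((X ⊔ Y) ⊓ A) ≤ eH ((X ⊔ A) ⊓ Y) + eH (X ⊓ A) := by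
  set Z := (X ⊔ Y) ⊓ A with hZ
  have h1 := eH_sup_inf Z X
  have hmod : (X ⊔ Y) ⊓ (X ⊔ A) = X ⊔ (Y ⊓ (X ⊔ A)) := sup_inf_assoc_of_le _ le_sup_left
  have h2 : eH (Z ⊔ X) ≤ eH X + eH ((X ⊔ A) ⊓ Y) := by
    have hle : Z ⊔ X ≤ X ⊔ (Y ⊓ (X ⊔ A)) := by
      rw [← hmod]
      exact sup_le (le_inf inf_le_left (inf_le_right.trans le_sup_right))
        (le_inf le_sup_left le_sup_left)
    refine le_trans (eH_mono hle) (le_trans (eH_sup_le _ _) ?_)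
    rw [inf_comm]
  have h3 : eH (Z ⊓ X) ≤ eH (X ⊓ A) :=
    eH_mono (le_inf inf_le_right (inf_le_left.trans inf_le_right))
  linarith

end helpers

/-- Left-hand side of inequality (a):
`H(B_1,…,B_{t+1},A_{t+2},…,A_M) + (t+2)(M−t−1)·H(C)`. -/
noncomputable def lhsA (t M : ℕ) (A B : ℕ → Submodule F V) (C : Submodule F V) : ℤ :=
  eH ((∑ i ∈ Icc 1 (t+1), B i) + ∑ i ∈ Icc (t+2) M, A i)
    + ((t : ℤ) + 2) * ((M : ℤ) - t - 1) * eH C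

/-- Right-hand side of inequality (a):
`(M−1)·I(A_1+⋯+A_M ; C) + (t+2)·Σ_{i=t+2}^{M} H(A_i)
 + ((t+2)(M−t)−1)·( H(C | A_1,…,A_M) + Σ_{i=1}^{M} I(Σ_{j≠i} A_j ; C) )
 + Σ_{i=1}^{t+1} ( H(B_i | A_j : j≠i) + H(B_i | A_i, C)
      + I(A_1+⋯+A_i ; A_{i+1}+⋯+A_{t+1}) + I(A_1+⋯+A_{i−1} ; A_i) )`. -/
noncomputable def rhsA (t M : ℕ) (A B : ℕ → Submodule F V) (C : Submodule F V) : ℤ :=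
  ((M : ℤ) - 1) * eH ((∑ i ∈ Icc 1 M, A i) ⊓ C)
  + ((t : ℤ) + 2) * ∑ i ∈ Icc (t+2) M, eH (A i)
  + (((t : ℤ) + 2) * ((M : ℤ) - t) - 1) *
      ((eH (C + ∑ i ∈ Icc 1 M, A i) - eH (∑ i ∈ Icc 1 M, A i))
        + ∑ i ∈ Icc 1 M, eH ((∑ j ∈ (Icc 1 M).erase i, A j) ⊓ C))
  + ∑ i ∈ Icc 1 (t+1),
      ((eH (B i + ∑ j ∈ (Icc 1 M).erase i, A j) - eH (∑ j ∈ (Icc 1 M).erase i, A j))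
        + (eH (B i + (A i + C)) - eH (A i + C))
        + eH ((∑ j ∈ Icc 1 i, A j) ⊓ (∑ j ∈ Icc (i+1) (t+1), A j))
        + eH ((∑ j ∈ Icc 1 (i-1), A j) ⊓ A i))

/-- Inequality (a) of the paper. -/
def IneqA (t M : ℕ) (A B : ℕ → Submodule F V) (C : Submodule F V) : Prop :=
  lhsA t M A B C ≤ rhsA t M A B C

set_option maxHeartbeats 2000000 in
/-- If `dim V ≤ n − t − 3`, inequality (a) holds over any finite field,
regardless of the characteristic. -/
theorem ineqA_of_small_dim (n t M : ℕ) (hn : 7 ≤ n) (ht2 : 2 ≤ t)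
    (ht : t ≤ (n - 1) / 2 - 1) (hM : M = n - t - 2)
    (F V : Type*) [Field F] [Fintype F] [AddCommGroup V] [Module F V]
    [FiniteDimensional F V] (hdim : Module.finrank F V ≤ n - t - 3)
    (A B : ℕ → Submodule F V) (C : Submodule F V) :
    IneqA t M A B C := by
  have htM : t + 1 ≤ M := by omega
  have hM1 : 1 ≤ M := by omega
  have hdim' : Module.finrank F V ≤ M - 1 := by omega
  -- pigeonhole
  have hpig : ∃ i, i ∈ Icc 1 M ∧ A i ≤ ∑ j ∈ Icc 1 (i-1), A j := by
    by_contra hc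
    push_neg at hc
    have key : ∀ k, k ≤ M → (k : ℕ) ≤ Module.finrank F ↥(∑ j ∈ Icc 1 k, A j) := by
      intro k
      induction k with
      | zero => intro _; simp
      | succ m ih =>
        intro hkM
        have hm := ih (by omega)
        have hsum : ∑ j ∈ Icc 1 (m+1), A j = (∑ j ∈ Icc 1 m, A j) + A (m+1) :=
          Finset.sum_Icc_succ_top (by omega) A
        have hne : ¬ A (m+1) ≤ ∑ j ∈ Icc 1 m, A j := by
          have := hc (m+1) (by simp [Finset.mem_Icc]; omega)
          simpa using this
        have hle : (∑ j ∈ Icc 1 m, A j) ≤ ∑ j ∈ Icc 1 (m+1), A j := by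
          rw [hsum, Submodule.add_eq_sup]; exact le_sup_left
        have hlt : (∑ j ∈ Icc 1 m, A j) < ∑ j ∈ Icc 1 (m+1), A j := by
          refine lt_of_le_of_ne hle (fun he => hne ?_)
          have h2 : A (m+1) ≤ ∑ j ∈ Icc 1 (m+1), A j := by
            rw [hsum, Submodule.add_eq_sup]; exact le_sup_right
          rwa [← he] at h2
        have := Submodule.finrank_lt_finrank_of_lt hlt
        omega
    have h1 := key M le_rfl
    have h2 : Module.finrank F ↥(∑ j ∈ Icc 1 M, A j) ≤ Module.finrank F V :=
      Submodule.finrank_le _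
    omega
  obtain ⟨i₀, hi₀mem, hi₀⟩ := hpig
  have hE₀ : (∑ j ∈ (Icc 1 M).erase i₀, A j) = ∑ i ∈ Icc 1 M, A i := by
    have hsplit : A i₀ + ∑ j ∈ (Icc 1 M).erase i₀, A j = ∑ i ∈ Icc 1 M, A i :=
      Finset.add_sum_erase _ A hi₀mem
    have hsub : (∑ j ∈ Icc 1 (i₀-1), A j) ≤ ∑ j ∈ (Icc 1 M).erase i₀, A j := by
      apply Finset.sum_le_sum_of_subset
      intro x hx
      simp only [Finset.mem_Icc] at hx
      simp only [Finset.mem_erase, Finset.mem_Icc]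
      have := (Finset.mem_Icc.mp hi₀mem)
      omega
    apply le_antisymm
    · rw [← hsplit, Submodule.add_eq_sup]; exact le_sup_right
    · rw [← hsplit, Submodule.add_eq_sup]
      exact sup_le (hi₀.trans hsub) le_rfl
  -- J ≤ SI
  have hJSI : eH ((∑ i ∈ Icc 1 M, A i) ⊓ C)
      ≤ ∑ i ∈ Icc 1 M, eH ((∑ j ∈ (Icc 1 M).erase i, A j) ⊓ C) := by
    have h0 : eH ((∑ j ∈ (Icc 1 M).erase i₀, A j) ⊓ C)
        = eH ((∑ i ∈ Icc 1 M, A i) ⊓ C) := by rw [hE₀]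
    calc eH ((∑ i ∈ Icc 1 M, A i) ⊓ C) = _ := h0.symm
      _ ≤ _ := Finset.single_le_sum
        (f := fun i => eH ((∑ j ∈ (Icc 1 M).erase i, A j) ⊓ C))
        (fun i _ => eH_nonneg _) hi₀mem
  -- per-index bound
  have hper : ∀ i ∈ Icc 1 (t+1),
      eH (B i) ≤ ((eH (B i + ∑ j ∈ (Icc 1 M).erase i, A j) - eH (∑ j ∈ (Icc 1 M).erase i, A j))
        + (eH (B i + (A i + C)) - eH (A i + C))
        + eH ((∑ j ∈ Icc 1 i, A j) ⊓ (∑ j ∈ Icc (i+1) (t+1), A j))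
        + eH ((∑ j ∈ Icc 1 (i-1), A j) ⊓ A i))
        + eH C + eH (∑ i ∈ Icc (t+2) M, A i) := by
    intro i hi
    rw [Finset.mem_Icc] at hi
    have hset : (Icc 1 M).erase i = Icc 1 (i-1) ∪ (Icc (i+1) (t+1) ∪ Icc (t+2) M) := by
      ext x
      simp only [Finset.mem_erase, Finset.mem_Icc, Finset.mem_union]
      omega
    have hd2 : Disjoint (Icc (i+1) (t+1)) (Icc (t+2) M) := by
      simp only [Finset.disjoint_left, Finset.mem_Icc]
      intro x h1 h2; omega
    have hd1 : Disjoint (Icc 1 (i-1)) (Icc (i+1) (t+1) ∪ Icc (t+2) M) := by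
      simp only [Finset.disjoint_left, Finset.mem_Icc, Finset.mem_union]
      intro x h1 h2
      rcases h2 with h2 | h2 <;> omega
    have hEPQ : (∑ j ∈ (Icc 1 M).erase i, A j)
        = (∑ j ∈ Icc 1 (i-1), A j) ⊔ ((∑ j ∈ Icc (i+1) (t+1), A j) ⊔ (∑ j ∈ Icc (t+2) M, A j)) := by
      rw [hset, Finset.sum_union hd1, Finset.sum_union hd2, Submodule.add_eq_sup,
        Submodule.add_eq_sup]
    have hPA : (∑ j ∈ Icc 1 i, A j) = (∑ j ∈ Icc 1 (i-1), A j) ⊔ A i := by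
      obtain ⟨m, rfl⟩ : ∃ m, i = m + 1 := ⟨i - 1, by omega⟩
      rw [Finset.sum_Icc_succ_top (by omega) A, Submodule.add_eq_sup]
      simp
    have id1 := eH_sup_inf (B i) (∑ j ∈ (Icc 1 M).erase i, A j)
    have id2 := eH_sup_inf (B i) (A i ⊔ C)
    have s3 := eH_pair (B i) (∑ j ∈ (Icc 1 M).erase i, A j) (A i ⊔ C)
    have l1 : eH ((∑ j ∈ (Icc 1 M).erase i, A j) ⊓ (A i ⊔ C))
        ≤ eH C + eH ((∑ j ∈ (Icc 1 M).erase i, A j) ⊓ A i) := by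
      rw [sup_comm (A i) C]
      exact eH_inf_sup_le _ C (A i)
    have l2 : eH ((∑ j ∈ (Icc 1 M).erase i, A j) ⊓ A i)
        ≤ eH (∑ j ∈ Icc (t+2) M, A j)
          + eH (A i ⊓ ((∑ j ∈ Icc 1 (i-1), A j) ⊔ (∑ j ∈ Icc (i+1) (t+1), A j))) := by
      have hre : (∑ j ∈ (Icc 1 M).erase i, A j) ⊓ A i
          = A i ⊓ ((∑ j ∈ Icc (t+2) M, A j)
              ⊔ ((∑ j ∈ Icc 1 (i-1), A j) ⊔ (∑ j ∈ Icc (i+1) (t+1), A j))) := by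
        rw [hEPQ, inf_comm]
        congr 1
        rw [sup_comm ((∑ j ∈ Icc (i+1) (t+1), A j)) ((∑ j ∈ Icc (t+2) M, A j)),
          ← sup_assoc, ← sup_assoc, sup_comm _ ((∑ j ∈ Icc (t+2) M, A j)), sup_assoc]
      rw [hre]
      exact eH_inf_sup_le (A i) _ _
    have l3 : eH (A i ⊓ ((∑ j ∈ Icc 1 (i-1), A j) ⊔ (∑ j ∈ Icc (i+1) (t+1), A j)))
        ≤ eH (((∑ j ∈ Icc 1 (i-1), A j) ⊔ A i) ⊓ (∑ j ∈ Icc (i+1) (t+1), A j))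
          + eH ((∑ j ∈ Icc 1 (i-1), A j) ⊓ A i) := by
      rw [inf_comm]
      exact eH_modstep _ _ _
    rw [Submodule.add_eq_sup, Submodule.add_eq_sup, Submodule.add_eq_sup, hPA]
    linarith
  -- sum the per-index bound
  have hsum : (∑ i ∈ Icc 1 (t+1), eH (B i))
      ≤ (∑ i ∈ Icc 1 (t+1),
        ((eH (B i + ∑ j ∈ (Icc 1 M).erase i, A j) - eH (∑ j ∈ (Icc 1 M).erase i, A j))
          + (eH (B i + (A i + C)) - eH (A i + C))
          + eH ((∑ j ∈ Icc 1 i, A j) ⊓ (∑ j ∈ Icc (i+1) (t+1), A j))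
          + eH ((∑ j ∈ Icc 1 (i-1), A j) ⊓ A i)))
        + ((t:ℤ)+1) * eH C + ((t:ℤ)+1) * eH (∑ i ∈ Icc (t+2) M, A i) := by
    have h := Finset.sum_le_sum hper
    rw [Finset.sum_add_distrib, Finset.sum_add_distrib, Finset.sum_const, Finset.sum_const,
      Nat.card_Icc] at h
    simp only [Nat.add_sub_cancel, nsmul_eq_mul] at h
    push_cast at h
    linarith
  -- assemble
  unfold IneqA lhsA rhsA
  have F1 : eH ((∑ i ∈ Icc 1 (t+1), B i) + ∑ i ∈ Icc (t+2) M, A i)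
      ≤ (∑ i ∈ Icc 1 (t+1), eH (B i)) + eH (∑ i ∈ Icc (t+2) M, A i) := by
    rw [Submodule.add_eq_sup]
    refine le_trans (eH_sup_le _ _) ?_
    have := eH_sum_le (Icc 1 (t+1)) B
    linarith
  have F3 : eH C = (eH (C + ∑ i ∈ Icc 1 M, A i) - eH (∑ i ∈ Icc 1 M, A i))
      + eH ((∑ i ∈ Icc 1 M, A i) ⊓ C) := by
    have h := eH_sup_inf C (∑ i ∈ Icc 1 M, A i)
    rw [inf_comm] at h
    rw [Submodule.add_eq_sup]
    linarith
  have F4 : eH (∑ i ∈ Icc (t+2) M, A i) ≤ ∑ i ∈ Icc (t+2) M, eH (A i) := eH_sum_le _ _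
  have htM' : (t:ℤ) + 1 ≤ (M:ℤ) := by exact_mod_cast htM
  have hK : (0:ℤ) ≤ ((t:ℤ)+2) * ((M:ℤ)-t) - 1 := by nlinarith
  have e2 : (((t:ℤ)+2) * ((M:ℤ)-t) - 1) * eH ((∑ i ∈ Icc 1 M, A i) ⊓ C)
      ≤ (((t:ℤ)+2) * ((M:ℤ)-t) - 1)
        * ∑ i ∈ Icc 1 M, eH ((∑ j ∈ (Icc 1 M).erase i, A j) ⊓ C) :=
    mul_le_mul_of_nonneg_left hJSI hK
  have e3 : ((t:ℤ)+2) * eH (∑ i ∈ Icc (t+2) M, A i)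
      ≤ ((t:ℤ)+2) * ∑ i ∈ Icc (t+2) M, eH (A i) :=
    mul_le_mul_of_nonneg_left F4 (by positivity)
  have e4 : (0:ℤ) ≤ ((M:ℤ)-1) * eH ((∑ i ∈ Icc 1 M, A i) ⊓ C) :=
    mul_nonneg (by linarith) (eH_nonneg _)
  nlinarith [F1, hsum, F3, e2, e3, e4]
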